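/- arXiv:2204.00712 — 2 statements merged into one kernel-verified Lean document; each statement's English description precedes it below -/
import Mathlib

section
/- Geometric outgoing estimate: let ν ≥ 1 be an integer, r₀ > 0 and m > 0. If n ≥ 8r₀ and 0 < δ < m/10, then for all x, p ∈ ℝ^ν with ‖x‖ > n, ‖p‖ > m and ⟨x,p⟩ ≥ 0, all t ≥ 0, all y ∈ ℝ^ν with ‖y‖ ≤ r₀, and all ξ ∈ ℝ^ν with ‖ξ − p‖ ≤ 2δ, one has ‖x + tξ − y‖ ≥ (1/16)(‖x‖ + n + t‖p‖). -/
open MeasureTheory Filter Complex SchwartzMap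
open scoped Topology ENNReal NNReal

notation "⟪" x ", " y "⟫_ℝ" => @inner ℝ _ _ x y
notation "⟪" x ", " y "⟫_ℂ" => @inner ℂ _ _ x y

noncomputable section

abbrev Ed (n : ℕ) : Type := EuclideanSpace ℝ (Fin n)
abbrev HL2 (n : ℕ) : Type := MeasureTheory.Lp ℂ 2 (volume : Measure (Ed n))

/-- The projection onto the last `d - k` ("transverse") coordinates. -/
def perpL (d k : ℕ) : Ed d →ₗ[ℝ] Ed (d - k) where
  toFun x := WithLp.toLp 2 (fun i : Fin (d - k) => x ⟨k + i.1, by have := i.2; omega⟩)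
  map_add' x y := rfl
  map_smul' c x := rfl

def perp (d k : ℕ) (x : Ed d) : Ed (d - k) := perpL d k x

/-- The projection onto the first `k` ("longitudinal") coordinates. -/
def para (d k : ℕ) (h : k ≤ d) (x : Ed d) : Ed k := WithLp.toLp 2 (fun i => x (Fin.castLE h i))

lemma perp_continuous (d k : ℕ) : Continuous (perp d k) :=
  (perpL d k).continuous_of_finiteDimensional

/-- The slab `S_R = {x : ‖x⊥‖ ≤ R}`. -/
def Slab (d k : ℕ) (R : ℝ) : Set (Ed d) := {x | ‖perp d k x‖ ≤ R}

lemma slab_meas (d k : ℕ) (R : ℝ) : MeasurableSet (Slab d k R) :=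
  (isClosed_le (continuous_norm.comp (perp_continuous d k)) continuous_const).measurableSet

/-- Multiplication of an `L²` function by the indicator of a measurable set. -/
def indLp (n : ℕ) (A : Set (Ed n)) (hA : MeasurableSet A) (ψ : HL2 n) : HL2 n :=
  ((MeasureTheory.Lp.memLp ψ).indicator hA).toLp _

/-- The (pointwise) Laplacian of a function on `ℝ^n`. -/
def lap (n : ℕ) (f : Ed n → ℂ) (x : Ed n) : ℂ :=
  ∑ i : Fin n, fderiv ℝ (fun y => fderiv ℝ f y (EuclideanSpace.single i 1)) x
    (EuclideanSpace.single i 1)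

lemma schwartz_memℒp (n : ℕ) (f : 𝓢(Ed n, ℂ)) : MemLp (⇑f) 2 (volume : Measure (Ed n)) := by
  rw [memLp_two_iff_integrable_sq_norm f.continuous.aestronglyMeasurable]
  obtain ⟨C, hC0, hC⟩ := f.decay 0 0
  have hbd : ∀ x : Ed n, ‖f x‖ ≤ C := by
    intro x
    have := hC x
    simpa [norm_iteratedFDeriv_zero] using this
  have h1 : Integrable (fun x : Ed n => C * ‖f x‖) volume :=
    ((f.integrable (μ := volume)).norm.const_mul C)
  refine h1.mono' ?_ ?_
  · exact (f.continuous.norm.pow 2).aestronglyMeasurable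
  · refine Eventually.of_forall fun x => ?_
    have : ‖f x‖ ^ 2 ≤ C * ‖f x‖ := by
      have := mul_le_mul_of_nonneg_right (hbd x) (norm_nonneg (f x))
      simpa [pow_two] using this
    simpa [_root_.abs_of_nonneg (sq_nonneg ‖f x‖)] using this

/-- A Schwartz function as an element of `L²`. -/
def schToLp (n : ℕ) (f : 𝓢(Ed n, ℂ)) : HL2 n := (schwartz_memℒp n f).toLp _

/-- A strongly continuous one-parameter unitary group. -/
def IsUnitaryGroup (n : ℕ) (U : ℝ → (HL2 n →L[ℂ] HL2 n)) : Prop :=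
  U 0 = 1 ∧ (∀ s t : ℝ, U (s + t) = (U s).comp (U t)) ∧
    (∀ (t : ℝ) (ψ : HL2 n), ‖U t ψ‖ = ‖ψ‖) ∧ (∀ ψ : HL2 n, Continuous fun t : ℝ => U t ψ)

/-- `U₀` is the free Schrödinger group `e^{-itH₀}`, `H₀ = -Δ`: it is a strongly continuous
unitary group whose weak generator on Schwartz functions is `iΔ`. -/
def IsFreeSchrodingerGroup (n : ℕ) (U₀ : ℝ → (HL2 n →L[ℂ] HL2 n)) : Prop :=
  IsUnitaryGroup n U₀ ∧ ∀ φ ψ : 𝓢(Ed n, ℂ),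
    HasDerivAt (fun t : ℝ => (⟪schToLp n φ, U₀ t (schToLp n ψ)⟫_ℂ))
      (∫ x : Ed n, (starRingEnd ℂ) (φ x) * (Complex.I * lap n (⇑ψ) x)) 0

/-- `U` is the Schrödinger group `e^{-itH}` with `H = -Δ + V`: it is a strongly continuous
unitary group whose weak generator on Schwartz functions is `i(Δ - V)`. -/
def IsSchrodingerGroup (n : ℕ) (V : Ed n → ℝ) (U : ℝ → (HL2 n →L[ℂ] HL2 n)) : Prop :=
  IsUnitaryGroup n U ∧ ∀ φ ψ : 𝓢(Ed n, ℂ),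
    HasDerivAt (fun t : ℝ => (⟪schToLp n φ, U t (schToLp n ψ)⟫_ℂ))
      (∫ x : Ed n, (starRingEnd ℂ) (φ x) * (Complex.I * (lap n (⇑ψ) x - (V x : ℂ) * ψ x))) 0

/-- The `L²`-normalized dilation `η_δ(y) = δ^{n/2} η(δ y)`, i.e. `η̂_δ(p) = δ^{-n/2} η̂(p/δ)`. -/
def etaDil (n : ℕ) (η : 𝓢(Ed n, ℂ)) (δ : ℝ) (y : Ed n) : ℂ :=
  ((δ ^ ((n : ℝ) / 2) : ℝ) : ℂ) * η (δ • y)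

/-- The coherent state `η_{x,p;δ}(y) = e^{ip·(y-x)} η_δ(y-x)`. -/
def coh (n : ℕ) (η : 𝓢(Ed n, ℂ)) (δ : ℝ) (x p y : Ed n) : ℂ :=
  Complex.exp (Complex.I * ((⟪p, y - x⟫_ℝ : ℝ) : ℂ)) * etaDil n η δ (y - x)

/-- The Fourier transform with the convention `f̂(ξ) = (2π)^{-n/2} ∫ f(x) e^{-ix·ξ} dx`. -/
def fourierP (n : ℕ) (f : Ed n → ℂ) (ξ : Ed n) : ℂ :=
  (((2 * Real.pi) ^ ((n : ℝ) / 2) : ℝ) : ℂ)⁻¹ *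
    ∫ x : Ed n, Complex.exp (-(Complex.I * ((⟪x, ξ⟫_ℝ : ℝ) : ℂ))) * f x

/-- `η` is normalized in `L²` and has Fourier transform supported in the unit ball. -/
def GoodEta (n : ℕ) (η : 𝓢(Ed n, ℂ)) : Prop :=
  (∫ y : Ed n, ‖η y‖ ^ 2) = 1 ∧ ∀ ξ : Ed n, 1 < ‖ξ‖ → fourierP n (⇑η) ξ = 0

/-- `P` is the family of phase-space observables built from `η`:
`⟨φ, P_δ(E) ψ⟩ = (2π)^{-n} ∬_E ⟨η_{x,p;δ}, ψ⟩ ⟨φ, η_{x,p;δ}⟩ dx dp`. -/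
def IsPhaseObs (n : ℕ) (η : 𝓢(Ed n, ℂ))
    (P : ℝ → Set (Ed n × Ed n) → (HL2 n →L[ℂ] HL2 n)) : Prop :=
  ∀ δ : ℝ, 0 < δ → ∀ E : Set (Ed n × Ed n), MeasurableSet E → ∀ φ ψ : HL2 n,
    ⟪φ, P δ E ψ⟫_ℂ = (((2 * Real.pi) ^ n : ℝ) : ℂ)⁻¹ *
      ∫ z in E, (∫ y : Ed n, (starRingEnd ℂ) (coh n η δ z.1 z.2 y) * ψ y) *
        (∫ y : Ed n, (starRingEnd ℂ) (φ y) * coh n η δ z.1 z.2 y)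

/-- The "far" region of phase space: `‖x⊥‖ > n` and `‖p⊥‖ > m`. -/
def Wfar (d k : ℕ) (n m : ℝ) : Set (Ed d × Ed d) :=
  {z | n < ‖perp d k z.1‖ ∧ m < ‖perp d k z.2‖}

/-- The "surface" region of phase space: the complement of the far region. -/
def Wsur (d k : ℕ) (n m : ℝ) : Set (Ed d × Ed d) := (Wfar d k n m)ᶜ

/-- The outgoing part of the far region: `⟨x⊥, p⊥⟩ ≥ 0`. -/
def Wout (d k : ℕ) (n m : ℝ) : Set (Ed d × Ed d) :=
  {z ∈ Wfar d k n m | 0 ≤ ⟪perp d k z.1, perp d k z.2⟫_ℝ}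

/-- The incoming part of the far region: `⟨x⊥, p⊥⟩ < 0`. -/
def Win (d k : ℕ) (n m : ℝ) : Set (Ed d × Ed d) :=
  {z ∈ Wfar d k n m | ⟪perp d k z.1, perp d k z.2⟫_ℝ < 0}

/-- The seminorm `𝒩^m(ψ) = limsup_{δ→0} limsup_{n→∞} sup_{t ≥ 0} ‖P_δ(W_{n,m;far}) e^{-itH} ψ‖`. -/
def Nsup (d k : ℕ) (P : ℝ → Set (Ed d × Ed d) → (HL2 d →L[ℂ] HL2 d))
    (U : ℝ → (HL2 d →L[ℂ] HL2 d)) (m : ℝ) (ψ : HL2 d) : ℝ :=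
  limsup (fun δ : ℝ =>
    limsup (fun n : ℝ => ⨆ t : {t : ℝ // 0 ≤ t}, ‖P δ (Wfar d k n m) (U t.1 ψ)‖) atTop)
    (𝓝[>] (0 : ℝ))

/-- The seminorm `𝒩̃^m(ψ)` with `limsup_{t→∞}` in place of `sup_{t≥0}`. -/
def Nls (d k : ℕ) (P : ℝ → Set (Ed d × Ed d) → (HL2 d →L[ℂ] HL2 d))
    (U : ℝ → (HL2 d →L[ℂ] HL2 d)) (m : ℝ) (ψ : HL2 d) : ℝ :=
  limsup (fun δ : ℝ =>
    limsup (fun n : ℝ => limsup (fun t : ℝ => ‖P δ (Wfar d k n m) (U t ψ)‖) atTop) atTop)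
    (𝓝[>] (0 : ℝ))

/-- The auxiliary surface subspace `H̃_sur`. -/
def HsurTilde (d k : ℕ) (P : ℝ → Set (Ed d × Ed d) → (HL2 d →L[ℂ] HL2 d))
    (U : ℝ → (HL2 d →L[ℂ] HL2 d)) : Set (HL2 d) :=
  {ψ | ∀ m : ℝ, 0 < m → Nsup d k P U m ψ = 0}

/-- The limsup surface subspace `H_sur^limsup`. -/
def HsurLs (d k : ℕ) (P : ℝ → Set (Ed d × Ed d) → (HL2 d →L[ℂ] HL2 d))
    (U : ℝ → (HL2 d →L[ℂ] HL2 d)) : Set (HL2 d) :=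
  {ψ | ∀ m : ℝ, 0 < m → Nls d k P U m ψ = 0}

/-- The surface subspace `H_sur`: states with `‖χ_{S_{vt}} e^{-itH} ψ‖ → ‖ψ‖` for every `v > 0`. -/
def Hsur (d k : ℕ) (U : ℝ → (HL2 d →L[ℂ] HL2 d)) : Set (HL2 d) :=
  {ψ | ∀ v : ℝ, 0 < v →
    Tendsto (fun t : ℝ => ‖indLp d (Slab d k (v * t)) (slab_meas d k (v * t)) (U t ψ)‖)
      atTop (𝓝 ‖ψ‖)}

/-- The subspace `H'_sur`: states with `sup_{t≥0} ‖χ_{S_R^c} e^{-itH} ψ‖ → 0` as `R → ∞`. -/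
def HsurP (d k : ℕ) (U : ℝ → (HL2 d →L[ℂ] HL2 d)) : Set (HL2 d) :=
  {ψ | Tendsto (fun R : ℝ =>
      ⨆ t : {t : ℝ // 0 ≤ t}, ‖indLp d (Slab d k R)ᶜ (slab_meas d k R).compl (U t.1 ψ)‖)
    atTop (𝓝 0)}

end

/-- Geometric outgoing estimate. -/
theorem stmt_5
    (ν : ℕ) (hν : 1 ≤ ν) (r₀ m n δ : ℝ) (hr₀ : 0 < r₀) (hm : 0 < m)
    (hn : 8 * r₀ ≤ n) (hδ0 : 0 < δ) (hδ : δ < m / 10)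
    (x p : EuclideanSpace ℝ (Fin ν)) (hx : n < ‖x‖) (hp : m < ‖p‖)
    (hxp : 0 ≤ ⟪x, p⟫_ℝ) (t : ℝ) (ht : 0 ≤ t)
    (y ξ : EuclideanSpace ℝ (Fin ν)) (hy : ‖y‖ ≤ r₀) (hξ : ‖ξ - p‖ ≤ 2 * δ) :
    (1 / 16 : ℝ) * (‖x‖ + n + t * ‖p‖) ≤ ‖x + t • ξ - y‖ := by
  have h1 : |⟪x, ξ - p⟫_ℝ| ≤ ‖x‖ * (2 * δ) :=
    le_trans (abs_real_inner_le_norm x (ξ - p))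
      (mul_le_mul_of_nonneg_left hξ (norm_nonneg x))
  have h2 : 0 ≤ ⟪x, ξ⟫_ℝ + ‖x‖ * (2 * δ) := by
    have : ⟪x, ξ⟫_ℝ = ⟪x, p⟫_ℝ + ⟪x, ξ - p⟫_ℝ := by
      rw [← inner_add_right]
      congr 1
      abel
    rw [this]
    have := abs_le.1 h1
    linarith [this.1]
  have hξn : ‖p‖ - 2 * δ ≤ ‖ξ‖ := by
    have := norm_sub_norm_le p ξ
    rw [norm_sub_rev] at this
    linarith
  have h3 : 4 / 5 * ‖p‖ ≤ ‖ξ‖ := by linarith [hδ, hp]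
  have hsq : ((‖x‖ + t * ‖p‖) / 2) ^ 2 ≤ ‖x + t • ξ‖ ^ 2 := by
    rw [← real_inner_self_eq_norm_sq (x + t • ξ)]
    rw [inner_add_add_self, real_inner_smul_left, real_inner_smul_right,
      real_inner_smul_left, real_inner_smul_right, real_inner_self_eq_norm_sq,
      real_inner_self_eq_norm_sq, real_inner_comm ξ x]
    have hb : (0:ℝ) ≤ ‖p‖ := norm_nonneg p
    have hxpos : (0:ℝ) < ‖x‖ := lt_of_le_of_lt (by nlinarith) hx
    nlinarith [real_inner_comm x ξ, mul_nonneg ht h2,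
      mul_nonneg (mul_nonneg ht hxpos.le) (show (0:ℝ) ≤ ‖p‖/5 - 2*δ by linarith),
      mul_nonneg (mul_nonneg ht (sub_nonneg.2 h3))
        (mul_nonneg ht (by positivity : (0:ℝ) ≤ ‖ξ‖ + 4/5 * ‖p‖)),
      sq_nonneg (‖x‖ - 3/5 * (t * ‖p‖)),
      mul_nonneg (mul_nonneg ht ht) (mul_nonneg hb hb)]
  have h4 : (‖x‖ + t * ‖p‖) / 2 ≤ ‖x + t • ξ‖ := by
    have h0 : (0:ℝ) ≤ (‖x‖ + t * ‖p‖) / 2 := by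
      have : (0:ℝ) < ‖x‖ := lt_of_le_of_lt (by nlinarith) hx
      have := mul_nonneg ht (norm_nonneg p)
      linarith
    nlinarith [norm_nonneg (x + t • ξ)]
  have h5 : ‖x + t • ξ‖ - ‖y‖ ≤ ‖x + t • ξ - y‖ := norm_sub_norm_le _ _
  have htp : (0:ℝ) ≤ t * ‖p‖ := mul_nonneg ht (norm_nonneg p)
  linarith
end

section
/- Pullback of limsup-surface states under the wave operator: if ψ ∈ Ran(Ω⁻) ∩ H_sur^limsup(H), then there exists φ ∈ H_sur^limsup(H₀) such that Ω⁻φ = ψ. -/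
open MeasureTheory Filter Complex SchwartzMap
open scoped Topology ENNReal NNReal

lemma limsup_le_aux {a b e : ℝ → ℝ} {B : ℝ} (ha0 : ∀ t, 0 ≤ a t)
    (hbB : ∀ t, b t ≤ B) (hab : ∀ t, a t ≤ b t + e t)
    (he : Tendsto e atTop (𝓝 0)) : limsup a atTop ≤ limsup b atTop := by
  apply le_of_forall_pos_le_add
  intro ε hε
  have hcob : atTop.IsCoboundedUnder (· ≤ ·) a :=
    isCoboundedUnder_le_of_le atTop ha0
  have hbd : atTop.IsBoundedUnder (· ≤ ·) b := isBoundedUnder_of ⟨B, hbB⟩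
  have h2 : ∀ᶠ t in atTop, b t < limsup b atTop + ε / 2 :=
    eventually_lt_of_limsup_lt (by linarith) hbd
  have h3 : ∀ᶠ t in atTop, e t ≤ ε / 2 :=
    he.eventually (eventually_le_nhds (by linarith))
  refine limsup_le_of_le hcob ?_
  filter_upwards [h2, h3] with t h2t h3t
  have := hab t; linarith

set_option maxHeartbeats 1000000 in
/-- Pullback of limsup-surface states under the wave operator. -/
theorem stmt_9
    (d k : ℕ) (hd : 2 ≤ d) (hk : 1 ≤ k) (hkd : k < d)
    (V : Ed d → ℝ) (M r₀ : ℝ) (hr₀ : 0 < r₀) (hVmeas : Measurable V)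
    (hM : ∀ x : Ed d, |V x| ≤ M) (hVsupp : Function.support V ⊆ Slab d k r₀)
    (U₀ U : ℝ → (HL2 d →L[ℂ] HL2 d))
    (hU₀ : IsFreeSchrodingerGroup d U₀) (hU : IsSchrodingerGroup d V U)
    (η : 𝓢(Ed d, ℂ)) (hη : GoodEta d η)
    (ηpar : 𝓢(Ed k, ℂ)) (ηperp : 𝓢(Ed (d - k), ℂ))
    (hsplit : ∀ x : Ed d, η x = ηpar (para d k hkd.le x) * ηperp (perp d k x))
    (P : ℝ → Set (Ed d × Ed d) → (HL2 d →L[ℂ] HL2 d)) (hP : IsPhaseObs d η P)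
    (Ωm : HL2 d →L[ℂ] HL2 d)
    (hΩm : ∀ ψ : HL2 d, Tendsto (fun t : ℝ => U (-t) (U₀ t ψ)) atTop (𝓝 (Ωm ψ))) :
    ∀ ψ : HL2 d, ψ ∈ Set.range Ωm → ψ ∈ HsurLs d k P U →
      ∃ φ ∈ HsurLs d k P U₀, Ωm φ = ψ := by
  rintro ψ ⟨φ, rfl⟩ hψ
  refine ⟨φ, ?_, rfl⟩
  intro m hm
  obtain ⟨⟨hU1, hU2, hU3, _⟩, -⟩ := hU
  obtain ⟨⟨_, _, hU03, _⟩, -⟩ := hU₀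
  have hinv : ∀ (t : ℝ) (x : HL2 d), U t (U (-t) x) = x := by
    intro t x
    have h : U (t + -t) x = U t (U (-t) x) := by rw [hU2 t (-t)]; rfl
    rw [add_neg_cancel, hU1] at h
    simpa using h.symm
  have he : Tendsto (fun t : ℝ => ‖U t (Ωm φ) - U₀ t φ‖) atTop (𝓝 0) := by
    have h1 : ∀ t : ℝ, ‖U t (Ωm φ) - U₀ t φ‖ = ‖Ωm φ - U (-t) (U₀ t φ)‖ := by
      intro t
      conv_lhs => rw [← hinv t (U₀ t φ)]
      rw [← map_sub, hU3]
    simp_rw [h1]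
    have h2 := ((tendsto_const_nhds (x := Ωm φ)).sub (hΩm φ)).norm
    simpa using h2
  have key : ∀ δ n : ℝ, limsup (fun t : ℝ => ‖P δ (Wfar d k n m) (U₀ t φ)‖) atTop
      = limsup (fun t : ℝ => ‖P δ (Wfar d k n m) (U t (Ωm φ))‖) atTop := by
    intro δ n
    set T := P δ (Wfar d k n m) with hT
    have hdiff : ∀ x y : HL2 d, ‖T x‖ ≤ ‖T y‖ + ‖T‖ * ‖x - y‖ := by
      intro x y
      have h1 : ‖T x‖ - ‖T y‖ ≤ ‖T x - T y‖ := norm_sub_norm_le _ _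
      have h2 : ‖T x - T y‖ ≤ ‖T‖ * ‖x - y‖ := by
        rw [← map_sub]; exact T.le_opNorm _
      linarith
    have he' : Tendsto (fun t : ℝ => ‖T‖ * ‖U t (Ωm φ) - U₀ t φ‖) atTop (𝓝 0) := by
      have h := he.const_mul ‖T‖
      rwa [mul_zero] at h
    apply le_antisymm
    · refine limsup_le_aux (B := ‖T‖ * ‖Ωm φ‖) (fun t => norm_nonneg _) ?_ ?_ he'
      · intro t
        calc ‖T (U t (Ωm φ))‖ ≤ ‖T‖ * ‖U t (Ωm φ)‖ := T.le_opNorm _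
        _ = ‖T‖ * ‖Ωm φ‖ := by rw [hU3]
      · intro t
        have := hdiff (U₀ t φ) (U t (Ωm φ))
        rw [norm_sub_rev] at this
        exact this
    · refine limsup_le_aux (B := ‖T‖ * ‖φ‖) (fun t => norm_nonneg _) ?_ ?_ he'
      · intro t
        calc ‖T (U₀ t φ)‖ ≤ ‖T‖ * ‖U₀ t φ‖ := T.le_opNorm _
        _ = ‖T‖ * ‖φ‖ := by rw [hU03]
      · intro t; exact hdiff (U t (Ωm φ)) (U₀ t φ)
  have hN : Nls d k P U₀ m φ = Nls d k P U m (Ωm φ) := by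
    unfold Nls
    have hfun : (fun δ : ℝ => limsup (fun n : ℝ =>
          limsup (fun t : ℝ => ‖P δ (Wfar d k n m) (U₀ t φ)‖) atTop) atTop)
        = fun δ : ℝ => limsup (fun n : ℝ =>
          limsup (fun t : ℝ => ‖P δ (Wfar d k n m) (U t (Ωm φ))‖) atTop) atTop := by
      funext δ
      have h : (fun n : ℝ => limsup (fun t : ℝ => ‖P δ (Wfar d k n m) (U₀ t φ)‖) atTop)
          = fun n : ℝ => limsup (fun t : ℝ => ‖P δ (Wfar d k n m) (U t (Ωm φ))‖) atTop :=
        funext fun n => key δ n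
      rw [h]
    rw [hfun]
  rw [hN]
  exact hψ m hm
end
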